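/- For every positive integer n and every fixed permutation π of [n] = {1,…,n}, the number of permutations σ of [n] that are not locally parallel to π is at most 6^n. -/

import Mathlib

def LocallyParallel {n : ℕ} (σ τ : Equiv.Perm (Fin n)) : Prop :=
  ∃ a b : Fin n, a ≠ b ∧ σ⁻¹ a < σ⁻¹ b ∧ τ⁻¹ b < τ⁻¹ a ∧
    Set.Icc (σ⁻¹ a) (σ⁻¹ b) ∩ Set.Icc (τ⁻¹ b) (τ⁻¹ a) = ∅

namespace LPaux

variable {n : ℕ}

/-- comparison code -/
def trip {α : Type*} [LinearOrder α] (a b : α) : Fin 3 :=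
  if a = b then 0 else if a < b then 1 else 2

lemma trip_eq_zero_iff {α : Type*} [LinearOrder α] {a b : α} : trip a b = 0 ↔ a = b := by
  unfold trip
  split_ifs with h1 h2
  · exact iff_of_true rfl h1
  · exact iff_of_false (by decide) h1
  · exact iff_of_false (by decide) h1

lemma trip_eq_one_iff {α : Type*} [LinearOrder α] {a b : α} : trip a b = 1 ↔ a < b := by
  unfold trip
  split_ifs with h1 h2
  · exact iff_of_false (by decide) (by simp [h1])
  · exact iff_of_true rfl h2
  · exact iff_of_false (by decide) h2

lemma trip_inj {α : Type*} [LinearOrder α] {a b c d : α}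
    (h : trip a b = trip c d) :
    (a = b ↔ c = d) ∧ (a < b ↔ c < d) :=
  ⟨by rw [← trip_eq_zero_iff, h, trip_eq_zero_iff],
   by rw [← trip_eq_one_iff, h, trip_eq_one_iff]⟩

/-- the key property of `f = σ⁻¹ * π` for non-parallel `σ`. -/
def Good (f : Equiv.Perm (Fin n)) : Prop :=
  ∀ ⦃x y : Fin n⦄, y < x → f x < f y → f x ≤ x ∧ y ≤ f y

lemma good_of_not_lp {σ π : Equiv.Perm (Fin n)} (h : ¬ LocallyParallel σ π) :
    Good (σ⁻¹ * π) := by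
  intro x y hyx hf
  simp only [Equiv.Perm.mul_apply] at hf
  by_contra hcon
  rw [not_and_or, not_le, not_le] at hcon
  apply h
  refine ⟨π x, π y, fun hab => hyx.ne' (π.injective hab), hf, by simpa using hyx, ?_⟩
  rw [Set.eq_empty_iff_forall_notMem]
  rintro z ⟨⟨hz1, hz2⟩, hz3, hz4⟩
  simp only [Equiv.Perm.inv_def, Equiv.symm_apply_apply] at hz3 hz4
  rcases hcon with hc | hc <;> simp only [Equiv.Perm.mul_apply] at hc
  · exact absurd (hz4.trans_lt (hc.trans_le hz1)) (lt_irrefl z)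
  · exact absurd (hz2.trans_lt (hc.trans_le hz3)) (lt_irrefl z)

lemma good1 {f : Equiv.Perm (Fin n)} (hf : Good f) {x x' : Fin n}
    (h : f x < x) (hx : x < x') : f x < f x' := by
  by_contra hc
  push_neg at hc
  have hlt : f x' < f x := lt_of_le_of_ne hc (fun he => hx.ne' (f.injective he))
  exact absurd ((hf hx hlt).2.trans_lt h) (lt_irrefl x)

lemma good2 {f : Equiv.Perm (Fin n)} (hf : Good f) {x y : Fin n}
    (h : x < f x) (hy : y < x) : f y < f x := by
  by_contra hc
  push_neg at hc
  have hlt : f x < f y := lt_of_le_of_ne hc (fun he => hy.ne' (f.injective he))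
  exact absurd (h.trans_le (hf hy hlt).1) (lt_irrefl x)

lemma step {f g : Equiv.Perm (Fin n)} (hf : Good f)
    (hpos : ∀ i, (f i = i ↔ g i = i) ∧ (f i < i ↔ g i < i))
    (hval : ∀ i, f⁻¹ i < i ↔ g⁻¹ i < i)
    (x : Fin n) (IH : ∀ y, y < x → f y = g y) : f x ≤ g x := by
  set v := g x with hv
  have hgx : g⁻¹ v = x := Equiv.symm_apply_apply g x
  have hzx : ¬ f⁻¹ v < x := by
    intro hlt
    have h1 : f (f⁻¹ v) = g (f⁻¹ v) := IH _ hlt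
    rw [show f (f⁻¹ v) = v from Equiv.apply_symm_apply f v] at h1
    have h2 : g⁻¹ v = f⁻¹ v := by
      apply g.injective
      rw [show g (g⁻¹ v) = v from Equiv.apply_symm_apply g v]
      exact h1
    exact hlt.ne (h2.symm.trans hgx)
  rcases lt_trichotomy x (f⁻¹ v) with hc | hc | hc
  · -- x < f⁻¹ v : show f x < f (f⁻¹ v) = v
    have hfv : f (f⁻¹ v) = v := Equiv.apply_symm_apply f v
    rcases lt_trichotomy v x with hvx | hvx | hvx
    · -- g x < x hence f x < x, apply good1
      have hx : f x < x := (hpos x).2.mpr hvx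
      exact le_of_lt (hfv ▸ good1 hf hx hc)
    · -- g x = x hence f x = x = v
      have hx : f x = x := (hpos x).1.mpr hvx
      exact le_of_eq (hx.trans hvx.symm)
    · -- x < v : then f⁻¹ v < v, so f⁻¹ v is an exceedance position
      have hfe : f⁻¹ v < v := (hval v).mpr (by rw [hgx]; exact hvx)
      have hex : f⁻¹ v < f (f⁻¹ v) := by rw [hfv]; exact hfe
      exact le_of_lt (hfv ▸ good2 hf hex hc)
  · exact le_of_eq (by rw [hc, show f (f⁻¹ v) = v from Equiv.apply_symm_apply f v])
  · exact absurd hc hzx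

lemma eq_of_code_eq {f g : Equiv.Perm (Fin n)} (hf : Good f) (hg : Good g)
    (hpos : ∀ i, trip (f i) i = trip (g i) i)
    (hval : ∀ i, trip (f⁻¹ i) i = trip (g⁻¹ i) i) : f = g := by
  have hpos' : ∀ i, (f i = i ↔ g i = i) ∧ (f i < i ↔ g i < i) := fun i => trip_inj (hpos i)
  have hval' : ∀ i, f⁻¹ i < i ↔ g⁻¹ i < i := fun i => (trip_inj (hval i)).2
  have hpos'' : ∀ i, (g i = i ↔ f i = i) ∧ (g i < i ↔ f i < i) :=
    fun i => ⟨(hpos' i).1.symm, (hpos' i).2.symm⟩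
  have hval'' : ∀ i, g⁻¹ i < i ↔ f⁻¹ i < i := fun i => (hval' i).symm
  have main : ∀ m : ℕ, ∀ x : Fin n, (x : ℕ) = m → f x = g x := by
    intro m
    induction m using Nat.strong_induction_on with
    | _ m ih =>
      intro x hx
      have IH : ∀ y, y < x → f y = g y := fun y hy => ih (y : ℕ) (hx ▸ hy) y rfl
      exact le_antisymm (step hf hpos' hval' x IH)
        (step hg hpos'' hval'' x (fun y hy => (IH y hy).symm))
  exact Equiv.ext fun x => main (x : ℕ) x rfl

end LPaux

theorem card_not_locallyParallel_le (n : ℕ) (hn : 0 < n) (π : Equiv.Perm (Fin n)) :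
    Nat.card {σ : Equiv.Perm (Fin n) // ¬ LocallyParallel σ π} ≤ 6 ^ n := by
  classical
  have fixIff : ∀ (f : Equiv.Perm (Fin n)) (i : Fin n), f i = i ↔ f⁻¹ i = i := by
    intro f i
    rw [Equiv.Perm.inv_eq_iff_eq]
    exact eq_comm
  let OO := {p : Fin 3 × Fin 3 // p.1 = 0 ↔ p.2 = 0}
  let E : {σ : Equiv.Perm (Fin n) // ¬ LocallyParallel σ π} → (Fin n → OO) :=
    fun σ i => ⟨(LPaux.trip ((σ.1⁻¹ * π) i) i, LPaux.trip ((σ.1⁻¹ * π)⁻¹ i) i), by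
      rw [LPaux.trip_eq_zero_iff, LPaux.trip_eq_zero_iff]; exact fixIff _ i⟩
  have hE : Function.Injective E := by
    intro σ σ' h
    have hfg : σ.1⁻¹ * π = σ'.1⁻¹ * π := by
      apply LPaux.eq_of_code_eq (LPaux.good_of_not_lp σ.2) (LPaux.good_of_not_lp σ'.2)
      · exact fun i => congrArg (fun p : OO => p.1.1) (congrFun h i)
      · exact fun i => congrArg (fun p : OO => p.1.2) (congrFun h i)
    exact Subtype.ext (inv_injective (mul_right_cancel hfg))
  calc Nat.card {σ : Equiv.Perm (Fin n) // ¬ LocallyParallel σ π}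
      ≤ Nat.card (Fin n → OO) := Nat.card_le_card_of_injective E hE
    _ = Fintype.card OO ^ n := by
        rw [Nat.card_eq_fintype_card, Fintype.card_fun, Fintype.card_fin]
    _ ≤ 6 ^ n := Nat.pow_le_pow_left (by decide) n
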